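/- Let k0, k1 be real numbers, not both zero. Then the function s ↦ k0·s + k1·(s² + 1)·arccos(1 − 2/(s² + 1)) has at most one zero in the interval (0, ∞). -/

import Mathlib

open Real Set

lemma arctan_lt_self' {x : ℝ} (hx : 0 < x) : Real.arctan x < x := by
  have h1 : 0 < Real.arctan x := (by rw [← Real.arctan_zero]; exact Real.arctan_strictMono hx)
  have h2 : Real.arctan x < π / 2 := Real.arctan_lt_pi_div_two x
  have := Real.lt_tan h1 h2
  rwa [Real.tan_arctan] at this

lemma arccos_eq_two_arctan {s : ℝ} (hs : 0 < s) :
    Real.arccos (1 - 2 / (s ^ 2 + 1)) = 2 * Real.arctan s⁻¹ := by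
  have hs1 : (0:ℝ) < s ^ 2 + 1 := by positivity
  have ht0 : 0 < Real.arctan s⁻¹ := (by rw [← Real.arctan_zero]; exact Real.arctan_strictMono (by positivity))
  have ht2 : Real.arctan s⁻¹ < π / 2 := Real.arctan_lt_pi_div_two _
  have hcos : Real.cos (2 * Real.arctan s⁻¹) = 1 - 2 / (s ^ 2 + 1) := by
    rw [Real.cos_two_mul, Real.cos_arctan]
    have h1 : (0:ℝ) < 1 + s⁻¹ ^ 2 := by positivity
    rw [div_pow, one_pow, Real.sq_sqrt h1.le]
    field_simp
    ring
  rw [← hcos, Real.arccos_cos (by linarith) (by linarith)]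

noncomputable def chebPhi : ℝ → ℝ := fun s => 2 * (s + s⁻¹) * Real.arctan s⁻¹

lemma chebPhi_hasDerivAt {s : ℝ} (hs : 0 < s) :
    HasDerivAt chebPhi
      (2 * (1 - (s ^ 2)⁻¹) * Real.arctan s⁻¹
        + 2 * (s + s⁻¹) * ((1 / (1 + s⁻¹ ^ 2)) * (-(s ^ 2)⁻¹))) s := by
  have hinv : HasDerivAt (fun x : ℝ => x⁻¹) (-(s ^ 2)⁻¹) s := hasDerivAt_inv hs.ne'
  have harct : HasDerivAt (fun x : ℝ => Real.arctan x⁻¹)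
      ((1 / (1 + s⁻¹ ^ 2)) * (-(s ^ 2)⁻¹)) s :=
    (Real.hasDerivAt_arctan s⁻¹).comp s hinv
  have hlin : HasDerivAt (fun x : ℝ => 2 * (x + x⁻¹)) (2 * (1 - (s ^ 2)⁻¹)) s := by
    have := ((hasDerivAt_id s).add hinv).const_mul (2:ℝ)
    exact this.congr_deriv (by ring)
  have := hlin.mul harct
  exact this

lemma chebPhi_deriv_neg {s : ℝ} (hs : 0 < s) :
    2 * (1 - (s ^ 2)⁻¹) * Real.arctan s⁻¹
      + 2 * (s + s⁻¹) * ((1 / (1 + s⁻¹ ^ 2)) * (-(s ^ 2)⁻¹)) < 0 := by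
  have hkey : (s ^ 2 - 1) * Real.arctan s⁻¹ < s := by
    have hat : 0 < Real.arctan s⁻¹ := (by rw [← Real.arctan_zero]; exact Real.arctan_strictMono (by positivity))
    rcases le_or_gt s 1 with h | h
    · have h1 : s ^ 2 - 1 ≤ 0 := by nlinarith
      nlinarith
    · have h2 : Real.arctan s⁻¹ < s⁻¹ := arctan_lt_self' (by positivity)
      have h1 : 0 < s ^ 2 - 1 := by nlinarith
      have : (s ^ 2 - 1) * Real.arctan s⁻¹ < (s ^ 2 - 1) * s⁻¹ := by
        exact mul_lt_mul_of_pos_left h2 h1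
      have h3 : (s ^ 2 - 1) * s⁻¹ < s := by
        rw [mul_inv_lt_iff₀ hs]; nlinarith
      linarith
  have hs2 : (0:ℝ) < s ^ 2 := by positivity
  have h1s : (0:ℝ) < 1 + s⁻¹ ^ 2 := by positivity
  have e1 : 2 * (s + s⁻¹) * ((1 / (1 + s⁻¹ ^ 2)) * (-(s ^ 2)⁻¹)) = -2 / s := by
    field_simp
  rw [e1]
  have e2 : 2 * (1 - (s ^ 2)⁻¹) * Real.arctan s⁻¹
      = (2 / s ^ 2) * ((s ^ 2 - 1) * Real.arctan s⁻¹) := by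
    field_simp
  rw [e2]
  have h4 : (2 / s ^ 2) * ((s ^ 2 - 1) * Real.arctan s⁻¹) < (2 / s ^ 2) * s :=
    mul_lt_mul_of_pos_left hkey (by positivity)
  have h5 : (2 / s ^ 2) * s = 2 / s := by
    field_simp
  rw [h5] at h4
  have e3 : (-2:ℝ)/s = -(2/s) := by ring
  rw [e3]
  linarith

lemma chebPhi_strictAntiOn : StrictAntiOn chebPhi (Ioi (0:ℝ)) := by
  apply strictAntiOn_of_deriv_neg (convex_Ioi 0)
  · intro x hx
    exact (chebPhi_hasDerivAt hx).continuousAt.continuousWithinAt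
  · intro x hx
    rw [interior_Ioi] at hx
    rw [(chebPhi_hasDerivAt hx).deriv]
    exact chebPhi_deriv_neg hx

theorem chebyshev_pair_at_most_one_zero
    (k0 k1 : ℝ) (hk : ¬(k0 = 0 ∧ k1 = 0)) :
    {s : ℝ | 0 < s ∧
      k0 * s + k1 * (s ^ 2 + 1) * Real.arccos (1 - 2 / (s ^ 2 + 1)) = 0}.encard ≤ 1 := by
  rw [Set.encard_le_one_iff]
  rintro a b ⟨ha, hae⟩ ⟨hb, hbe⟩
  rcases eq_or_ne k1 0 with h1 | h1
  · have h0 : k0 ≠ 0 := fun h => hk ⟨h, h1⟩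
    subst h1
    simp only [zero_mul, add_zero, mul_eq_zero] at hae hbe
    rcases hae with h | h
    · exact absurd h h0
    · exact absurd h ha.ne'
  · -- rewrite the equation as s * (k0 + k1 * chebPhi s) = 0
    have key : ∀ s : ℝ, 0 < s →
        k0 * s + k1 * (s ^ 2 + 1) * Real.arccos (1 - 2 / (s ^ 2 + 1)) = 0 →
        chebPhi s = -k0 / k1 := by
      intro s hs he
      rw [arccos_eq_two_arctan hs] at he
      have hphi : k1 * (s ^ 2 + 1) * (2 * Real.arctan s⁻¹) = s * (k1 * chebPhi s) := by
        unfold chebPhi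
        field_simp
      rw [hphi] at he
      have : s * (k0 + k1 * chebPhi s) = 0 := by linarith
      have h2 : k0 + k1 * chebPhi s = 0 := by
        rcases mul_eq_zero.mp this with h | h
        · exact absurd h hs.ne'
        · exact h
      field_simp
      linarith
    have ha' := key a ha hae
    have hb' := key b hb hbe
    exact chebPhi_strictAntiOn.injOn ha hb (ha'.trans hb'.symm)
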